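/- For m ≥ 5, let H = K_{m,m} \ E(C_{2m}) and W a resolving set of H. If A and B are two distinct gaps of W each containing exactly three vertices, then the middle vertices of A and B lie in different parts of the bipartition of H. -/

import Mathlib

/-- `W` resolves `G`: every vertex is determined by its distance vector to `W`. -/
def Resolves {V : Type*} (G : SimpleGraph V) (W : Set V) : Prop :=
  ∀ u v : V, (∀ w ∈ W, G.dist u w = G.dist v w) → u = v

/-- Metric dimension: minimum cardinality of a (finite) resolving set. -/
noncomputable def metricDim {V : Type*} (G : SimpleGraph V) : ℕ :=
  sInf {k | ∃ W : Set V, W.Finite ∧ W.ncard = k ∧ Resolves G W}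
/-- `K_{m,m}` minus the Hamiltonian cycle `x₁ y₁ x₂ y₂ … x_m y_m x₁` (0-indexed:
cycle edges are `xᵢ yᵢ` and `yᵢ x_{i+1 mod m}`). -/
def cycGraph (m : ℕ) : SimpleGraph (Fin m ⊕ Fin m) where
  Adj u v := match u, v with
    | Sum.inl i, Sum.inr j => j ≠ i ∧ (i : ℕ) ≠ ((j : ℕ) + 1) % m
    | Sum.inr j, Sum.inl i => j ≠ i ∧ (i : ℕ) ≠ ((j : ℕ) + 1) % m
    | _, _ => False
  symm := ⟨by rintro (i|i) (j|j) h <;> exact h⟩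
  loopless := ⟨by rintro (i|i) h <;> exact h⟩

/-- Position `k` (taken mod `2m`) along the Hamiltonian cycle
`x₁ y₁ x₂ y₂ …`: even positions `2i ↦ xᵢ`, odd positions `2i+1 ↦ yᵢ`. -/
def cyc (m : ℕ) [NeZero m] (k : ℕ) : Fin m ⊕ Fin m :=
  if (k % (2 * m)) % 2 = 0 then
    Sum.inl ⟨k % (2 * m) / 2, by
      have hm : 0 < m := Nat.pos_of_ne_zero (NeZero.ne m)
      have h : k % (2 * m) < 2 * m := Nat.mod_lt _ (by omega)
      exact Nat.div_lt_of_lt_mul (by omega)⟩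
  else
    Sum.inr ⟨k % (2 * m) / 2, by
      have hm : 0 < m := Nat.pos_of_ne_zero (NeZero.ne m)
      have h : k % (2 * m) < 2 * m := Nat.mod_lt _ (by omega)
      exact Nat.div_lt_of_lt_mul (by omega)⟩

/-- `W` has a gap of exactly `L` vertices starting at cycle position `s`:
the positions `s` and `s+L+1` are in `W` and the `L` positions strictly between are not. -/
def IsGap (m : ℕ) [NeZero m] (W : Set (Fin m ⊕ Fin m)) (s L : ℕ) : Prop :=
  cyc m s ∈ W ∧ cyc m (s + L + 1) ∈ W ∧ ∀ t, 1 ≤ t → t ≤ L → cyc m (s + t) ∉ W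

/-! ### Auxiliary lemmas -/

lemma cyc_inl_iff (m : ℕ) [NeZero m] (t : ℕ) (i : Fin m) :
    cyc m t = Sum.inl i ↔ t % (2 * m) = 2 * (i : ℕ) := by
  unfold cyc
  split_ifs with h
  · simp only [Sum.inl.injEq, Fin.ext_iff]
    omega
  · simp only [reduceCtorEq, false_iff]
    omega

lemma cyc_inr_iff (m : ℕ) [NeZero m] (t : ℕ) (i : Fin m) :
    cyc m t = Sum.inr i ↔ t % (2 * m) = 2 * (i : ℕ) + 1 := by
  unfold cyc
  split_ifs with h
  · simp only [reduceCtorEq, false_iff]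
    omega
  · simp only [Sum.inr.injEq, Fin.ext_iff]
    omega

lemma cycGraph_adj_lr (m : ℕ) (i j : Fin m) :
    (cycGraph m).Adj (Sum.inl i) (Sum.inr j) ↔
      (j : ℕ) ≠ (i : ℕ) ∧ (i : ℕ) ≠ ((j : ℕ) + 1) % m := by
  show (j ≠ i ∧ _) ↔ _
  rw [Fin.ne_iff_vne]

lemma cycGraph_adj_rl (m : ℕ) (i j : Fin m) :
    (cycGraph m).Adj (Sum.inr j) (Sum.inl i) ↔
      (j : ℕ) ≠ (i : ℕ) ∧ (i : ℕ) ≠ ((j : ℕ) + 1) % m := by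
  show (j ≠ i ∧ _) ↔ _
  rw [Fin.ne_iff_vne]

lemma cycGraph_not_adj_ll (m : ℕ) (i j : Fin m) :
    ¬ (cycGraph m).Adj (Sum.inl i) (Sum.inl j) := fun h => h

lemma cycGraph_not_adj_rr (m : ℕ) (i j : Fin m) :
    ¬ (cycGraph m).Adj (Sum.inr i) (Sum.inr j) := fun h => h

lemma exists_common (m : ℕ) (hm : 5 ≤ m) (a b c d : Fin m) :
    ∃ k : Fin m, k ≠ a ∧ k ≠ b ∧ k ≠ c ∧ k ≠ d := by
  have hcard : ({a, b, c, d} : Finset (Fin m)).card ≤ 4 := by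
    apply le_trans (Finset.card_insert_le _ _)
    apply Nat.succ_le_succ
    apply le_trans (Finset.card_insert_le _ _)
    apply Nat.succ_le_succ
    apply le_trans (Finset.card_insert_le _ _)
    simp
  have hcompl : (0 : ℕ) < ({a, b, c, d} : Finset (Fin m))ᶜ.card := by
    rw [Finset.card_compl]
    simp only [Fintype.card_fin]
    omega
  obtain ⟨k, hk⟩ := Finset.card_pos.mp hcompl
  simp only [Finset.mem_compl, Finset.mem_insert, Finset.mem_singleton, not_or] at hk
  exact ⟨k, hk.1, hk.2.1, hk.2.2.1, hk.2.2.2⟩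

lemma pred_mod (m i k : ℕ) (hk : k < m) (h : i = (k + 1) % m) :
    k = (i + m - 1) % m := by
  rcases Nat.lt_or_ge (k + 1) m with h1 | h1
  · rw [Nat.mod_eq_of_lt h1] at h
    subst h
    have h2 : k + 1 + m - 1 = k + m := by omega
    rw [h2, Nat.add_mod_right, Nat.mod_eq_of_lt hk]
  · have hkm : k + 1 = m := by omega
    rw [hkm, Nat.mod_self] at h
    subst h
    rw [Nat.mod_eq_of_lt (by omega)]
    omega

lemma dist_two_ll (m : ℕ) (hm : 5 ≤ m) (i j : Fin m) (hij : i ≠ j) :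
    (cycGraph m).dist (Sum.inl i) (Sum.inl j) = 2 := by
  have hm0 : 0 < m := by omega
  obtain ⟨k, hk1, hk2, hk3, hk4⟩ := exists_common m hm i j
    ⟨((i : ℕ) + m - 1) % m, Nat.mod_lt _ hm0⟩ ⟨((j : ℕ) + m - 1) % m, Nat.mod_lt _ hm0⟩
  have adj1 : (cycGraph m).Adj (Sum.inl i) (Sum.inr k) := by
    rw [cycGraph_adj_lr]
    refine ⟨fun h => hk1 (Fin.ext h), fun h => ?_⟩
    exact hk3 (Fin.ext (pred_mod m (i : ℕ) (k : ℕ) k.isLt h))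
  have adj2 : (cycGraph m).Adj (Sum.inr k) (Sum.inl j) := by
    rw [cycGraph_adj_rl]
    refine ⟨fun h => hk2 (Fin.ext h), fun h => ?_⟩
    exact hk4 (Fin.ext (pred_mod m (j : ℕ) (k : ℕ) k.isLt h))
  have hle : (cycGraph m).dist (Sum.inl i) (Sum.inl j) ≤ 2 := by
    have := SimpleGraph.dist_le
      (SimpleGraph.Walk.cons adj1 (SimpleGraph.Walk.cons adj2 SimpleGraph.Walk.nil))
    simpa using this
  have hpos : 0 < (cycGraph m).dist (Sum.inl i) (Sum.inl j) :=
    (SimpleGraph.Walk.cons adj1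
      (SimpleGraph.Walk.cons adj2 SimpleGraph.Walk.nil)).reachable.pos_dist_of_ne
      (by simpa using hij)
  have hne1 : (cycGraph m).dist (Sum.inl i) (Sum.inl j) ≠ 1 := by
    intro h1
    rw [SimpleGraph.dist_eq_one_iff_adj] at h1
    exact cycGraph_not_adj_ll m i j h1
  omega

lemma dist_two_rr (m : ℕ) (hm : 5 ≤ m) (i j : Fin m) (hij : i ≠ j) :
    (cycGraph m).dist (Sum.inr i) (Sum.inr j) = 2 := by
  have hm0 : 0 < m := by omega
  obtain ⟨k, hk1, hk2, hk3, hk4⟩ := exists_common m hm i j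
    ⟨((i : ℕ) + 1) % m, Nat.mod_lt _ hm0⟩ ⟨((j : ℕ) + 1) % m, Nat.mod_lt _ hm0⟩
  have adj1 : (cycGraph m).Adj (Sum.inr i) (Sum.inl k) := by
    rw [cycGraph_adj_rl]
    refine ⟨fun h => hk1 (Fin.ext h.symm), fun h => ?_⟩
    exact hk3 (Fin.ext h)
  have adj2 : (cycGraph m).Adj (Sum.inl k) (Sum.inr j) := by
    rw [cycGraph_adj_lr]
    refine ⟨fun h => hk2 (Fin.ext h.symm), fun h => ?_⟩
    exact hk4 (Fin.ext h)
  have hle : (cycGraph m).dist (Sum.inr i) (Sum.inr j) ≤ 2 := by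
    have := SimpleGraph.dist_le
      (SimpleGraph.Walk.cons adj1 (SimpleGraph.Walk.cons adj2 SimpleGraph.Walk.nil))
    simpa using this
  have hpos : 0 < (cycGraph m).dist (Sum.inr i) (Sum.inr j) :=
    (SimpleGraph.Walk.cons adj1
      (SimpleGraph.Walk.cons adj2 SimpleGraph.Walk.nil)).reachable.pos_dist_of_ne
      (by simpa using hij)
  have hne1 : (cycGraph m).dist (Sum.inr i) (Sum.inr j) ≠ 1 := by
    intro h1
    rw [SimpleGraph.dist_eq_one_iff_adj] at h1
    exact cycGraph_not_adj_rr m i j h1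
  omega

/-- `(a+1) % n` from `a % n`. -/
lemma succ_mod (a n : ℕ) (hn : 1 < n) : (a + 1) % n = (a % n + 1) % n := by
  conv_lhs => rw [Nat.add_mod]
  rw [Nat.mod_eq_of_lt hn]

/-- If `inl i` is the middle of a `3`-gap, it is adjacent to every
cross-side vertex of `W`. -/
lemma gap_middle_adj_l (m : ℕ) [NeZero m] (hm : 5 ≤ m) (W : Set (Fin m ⊕ Fin m))
    (s : ℕ) (h : IsGap m W s 3) (i : Fin m) (hu : cyc m (s + 2) = Sum.inl i)
    (k : Fin m) (hw : Sum.inr k ∈ W) :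
    (cycGraph m).Adj (Sum.inl i) (Sum.inr k) := by
  have hmod : (s + 2) % (2 * m) = 2 * (i : ℕ) := (cyc_inl_iff m _ i).mp hu
  have him : (i : ℕ) < m := i.isLt
  have hkm : (k : ℕ) < m := k.isLt
  rw [cycGraph_adj_lr]
  constructor
  · -- k ≠ i, else `inr k = cyc m (s+3)` is in the gap
    intro hki
    apply h.2.2 3 (by norm_num) (by norm_num)
    have : cyc m (s + 3) = Sum.inr k := by
      rw [cyc_inr_iff]
      have h3 : (s + 3) % (2 * m) = ((s + 2) % (2 * m) + 1) % (2 * m) :=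
        succ_mod (s + 2) (2 * m) (by omega)
      rw [h3, hmod, hki, Nat.mod_eq_of_lt (by omega)]
    rw [this]
    exact hw
  · -- i ≠ (k+1) % m, else `inr k = cyc m (s+1)` is in the gap
    intro hik
    apply h.2.2 1 (by norm_num) (by norm_num)
    have : cyc m (s + 1) = Sum.inr k := by
      rw [cyc_inr_iff]
      have h2 : (s + 2) % (2 * m) = ((s + 1) % (2 * m) + 1) % (2 * m) :=
        succ_mod (s + 1) (2 * m) (by omega)
      have hb : (s + 1) % (2 * m) < 2 * m := Nat.mod_lt _ (by omega)
      set b := (s + 1) % (2 * m) with hbdef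
      rw [hmod] at h2
      rcases Nat.lt_or_ge (k + 1 : ℕ) m with h1 | h1
      · -- i = k + 1
        rw [Nat.mod_eq_of_lt h1] at hik
        -- so 2i = 2k+2 ≥ 2, hence b + 1 < 2m and b = 2i - 1 = 2k + 1
        have hblt : b + 1 < 2 * m ∨ b + 1 = 2 * m := by omega
        rcases hblt with hb2 | hb2
        · rw [Nat.mod_eq_of_lt hb2] at h2
          omega
        · rw [hb2, Nat.mod_self] at h2
          omega
      · -- k = m - 1, i = 0
        have hkeq : (k : ℕ) + 1 = m := by omega
        rw [hkeq, Nat.mod_self] at hik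
        have hblt : b + 1 < 2 * m ∨ b + 1 = 2 * m := by omega
        rcases hblt with hb2 | hb2
        · rw [Nat.mod_eq_of_lt hb2] at h2
          omega
        · rw [hb2, Nat.mod_self] at h2
          omega
    rw [this]
    exact hw

/-- If `inr i` is the middle of a `3`-gap, it is adjacent to every
cross-side vertex of `W`. -/
lemma gap_middle_adj_r (m : ℕ) [NeZero m] (hm : 5 ≤ m) (W : Set (Fin m ⊕ Fin m))
    (s : ℕ) (h : IsGap m W s 3) (i : Fin m) (hu : cyc m (s + 2) = Sum.inr i)
    (k : Fin m) (hw : Sum.inl k ∈ W) :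
    (cycGraph m).Adj (Sum.inr i) (Sum.inl k) := by
  have hmod : (s + 2) % (2 * m) = 2 * (i : ℕ) + 1 := (cyc_inr_iff m _ i).mp hu
  have him : (i : ℕ) < m := i.isLt
  have hkm : (k : ℕ) < m := k.isLt
  rw [cycGraph_adj_rl]
  constructor
  · -- i ≠ k, else `inl k = cyc m (s+1)` is in the gap
    intro hik
    apply h.2.2 1 (by norm_num) (by norm_num)
    have : cyc m (s + 1) = Sum.inl k := by
      rw [cyc_inl_iff]
      have h2 : (s + 2) % (2 * m) = ((s + 1) % (2 * m) + 1) % (2 * m) :=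
        succ_mod (s + 1) (2 * m) (by omega)
      have hb : (s + 1) % (2 * m) < 2 * m := Nat.mod_lt _ (by omega)
      set b := (s + 1) % (2 * m)
      rw [hmod] at h2
      have hblt : b + 1 < 2 * m ∨ b + 1 = 2 * m := by omega
      rcases hblt with hb2 | hb2
      · rw [Nat.mod_eq_of_lt hb2] at h2
        omega
      · rw [hb2, Nat.mod_self] at h2
        omega
    rw [this]
    exact hw
  · -- k ≠ (i+1) % m, else `inl k = cyc m (s+3)` is in the gap
    intro hki
    apply h.2.2 3 (by norm_num) (by norm_num)
    have : cyc m (s + 3) = Sum.inl k := by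
      rw [cyc_inl_iff]
      have h3 : (s + 3) % (2 * m) = ((s + 2) % (2 * m) + 1) % (2 * m) :=
        succ_mod (s + 2) (2 * m) (by omega)
      rw [h3, hmod]
      rcases Nat.lt_or_ge ((i : ℕ) + 1) m with h1 | h1
      · rw [Nat.mod_eq_of_lt h1] at hki
        rw [Nat.mod_eq_of_lt (by omega)]
        omega
      · have hieq : (i : ℕ) + 1 = m := by omega
        rw [hieq, Nat.mod_self] at hki
        have : 2 * (i : ℕ) + 1 + 1 = 2 * m := by omega
        rw [this, Nat.mod_self]
        omega
    rw [this]
    exact hw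

lemma cyc_inj (m : ℕ) [NeZero m] (a b : ℕ) (h : cyc m a = cyc m b) :
    a % (2 * m) = b % (2 * m) := by
  rcases hb : cyc m b with i | i
  · rw [hb] at h
    rw [cyc_inl_iff] at h hb
    omega
  · rw [hb] at h
    rw [cyc_inr_iff] at h hb
    omega

/-- for `m ≥ 5`, any two distinct gaps of three vertices of a
resolving set of `K_{m,m} \ E(C_{2m})` have their middle vertices in different
parts of the bipartition. -/
theorem stmt11 (m : ℕ) [NeZero m] (hm : 5 ≤ m) (W : Set (Fin m ⊕ Fin m))
    (hW : Resolves (cycGraph m) W) (s₁ s₂ : ℕ)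
    (h₁ : IsGap m W s₁ 3) (h₂ : IsGap m W s₂ 3)
    (hne : s₁ % (2 * m) ≠ s₂ % (2 * m)) :
    (cyc m (s₁ + 2)).isLeft ≠ (cyc m (s₂ + 2)).isLeft := by
  intro hEq
  have hmm : 2 < 2 * m := by omega
  have key : ∀ x : ℕ, (x + 2) % (2 * m) =
      if x % (2 * m) + 2 < 2 * m then x % (2 * m) + 2 else x % (2 * m) + 2 - 2 * m := by
    intro x
    have hx : x % (2 * m) < 2 * m := Nat.mod_lt _ (by omega)
    have e : (x + 2) % (2 * m) = (x % (2 * m) + 2) % (2 * m) := by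
      conv_lhs => rw [Nat.add_mod]
      rw [Nat.mod_eq_of_lt hmm]
    split_ifs with hlt
    · rw [e, Nat.mod_eq_of_lt hlt]
    · rw [e, Nat.mod_eq_sub_mod (by omega), Nat.mod_eq_of_lt (by omega)]
  -- the two middles are distinct
  have hneq : cyc m (s₁ + 2) ≠ cyc m (s₂ + 2) := by
    intro h
    have hab := cyc_inj m (s₁ + 2) (s₂ + 2) h
    rw [key s₁, key s₂] at hab
    have h1 : s₁ % (2 * m) < 2 * m := Nat.mod_lt _ (by omega)
    have h2 : s₂ % (2 * m) < 2 * m := Nat.mod_lt _ (by omega)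
    split_ifs at hab <;> omega
  rcases hu : cyc m (s₁ + 2) with i | i <;> rcases hv : cyc m (s₂ + 2) with j | j <;>
    rw [hu, hv] at hEq hneq
  · -- both middles on the left
    apply hneq
    apply hW
    rintro (k | k) hw
    · -- same-side landmark: both distances are 2
      have hik : i ≠ k := by
        rintro rfl
        rw [← hu] at hw
        exact h₁.2.2 2 (by norm_num) (by norm_num) hw
      have hjk : j ≠ k := by
        rintro rfl
        rw [← hv] at hw
        exact h₂.2.2 2 (by norm_num) (by norm_num) hw
      rw [dist_two_ll m hm i k hik, dist_two_ll m hm j k hjk]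
    · -- cross-side landmark: both distances are 1
      rw [SimpleGraph.dist_eq_one_iff_adj.mpr (gap_middle_adj_l m hm W s₁ h₁ i hu k hw),
        SimpleGraph.dist_eq_one_iff_adj.mpr (gap_middle_adj_l m hm W s₂ h₂ j hv k hw)]
  · simp at hEq
  · simp at hEq
  · -- both middles on the right
    apply hneq
    apply hW
    rintro (k | k) hw
    · rw [SimpleGraph.dist_eq_one_iff_adj.mpr (gap_middle_adj_r m hm W s₁ h₁ i hu k hw),
        SimpleGraph.dist_eq_one_iff_adj.mpr (gap_middle_adj_r m hm W s₂ h₂ j hv k hw)]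
    · have hik : i ≠ k := by
        rintro rfl
        rw [← hu] at hw
        exact h₁.2.2 2 (by norm_num) (by norm_num) hw
      have hjk : j ≠ k := by
        rintro rfl
        rw [← hv] at hw
        exact h₂.2.2 2 (by norm_num) (by norm_num) hw
      rw [dist_two_rr m hm i k hik, dist_two_rr m hm j k hjk]
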